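/- Let φ : ℝ → ℝ be continuously differentiable and strictly increasing, let a ∈ ℝ, l > 0, T ∈ ℝ, let s ≥ 1 and k ≥ 1 be integers, and for each p ∈ {1, …, k} let A_p < B_p satisfy φ^[p](A_p) = T and φ^[p](B_p) = T + 2l. If {f_n}_{n=0}^∞ is an orthonormal system in L²([a, a+2l]) (orthogonal with ∫_a^{a+2l} f_n(t)² dt = 1), then for every choice of indices p₁, …, p_s ∈ {1, …, k} the s-th generation functions f_n^{p₁,…,p_s} satisfy ∫_a^{a+2l} (f_n^{p₁,…,p_s}(t))² dt = ∏_{i=1}^{s} (2l/(B_{p_i} − A_{p_i})), and consequently the rescaled system { (∏_{i=1}^{s} √((B_{p_i} − A_{p_i})/(2l))) · f_n^{p₁,…,p_s} }_{n=0}^∞ is an orthonormal system in L²([a, a+2l]). -/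

import Mathlib

open MeasureTheory Set

/-- The affine map `ρ_p` sending `[a, a+2l]` onto `[A, B]`. -/
noncomputable def rhoMap (A B a l : ℝ) (t : ℝ) : ℝ := (B - A) / (2 * l) * (t - a) + A

/-- The map `u_p(t) = φ^[p](ρ_p(t)) − T + a`. -/
noncomputable def uMap (φ : ℝ → ℝ) (p : ℕ) (A B a l T : ℝ) (t : ℝ) : ℝ :=
  φ^[p] (rhoMap A B a l t) - T + a

/-- The weight `w_p(t) = ∏_{r=0}^{p−1} √(φ′(φ^[r](ρ_p(t))))`. -/
noncomputable def wMap (φ : ℝ → ℝ) (p : ℕ) (A B a l : ℝ) (t : ℝ) : ℝ :=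
  ∏ r ∈ Finset.range p, Real.sqrt (deriv φ (φ^[r] (rhoMap A B a l t)))

/-- The `s`-th generation transform
`f^{p₁,…,p_s}(t) = f(u_{p₁}(⋯ u_{p_s}(t) ⋯)) · ∏_{i=1}^{s} w_{p_i}(u_{p_{i+1}}(⋯ u_{p_s}(t) ⋯))`
for the list `[p₁, …, p_s]`, defined by the recursion
`gen (p :: ps) f = gen ps (fun x => f (u_p x) * w_p x)`. -/
noncomputable def gen (φ : ℝ → ℝ) (a l T : ℝ) (A B : ℕ → ℝ) : List ℕ → (ℝ → ℝ) → ℝ → ℝ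
  | [], f, t => f t
  | p :: ps, f, t =>
      gen φ a l T A B ps
        (fun x => f (uMap φ p (A p) (B p) a l T x) * wMap φ p (A p) (B p) a l x) t

lemma deriv_nonneg_of_mono {φ : ℝ → ℝ} (hφ : ContDiff ℝ 1 φ) (hmono : StrictMono φ) (x : ℝ) :
    0 ≤ deriv φ x := by
  have hd : HasDerivAt φ (deriv φ x) x := ((hφ.differentiable one_ne_zero) x).hasDerivAt
  have h := (hasDerivAt_iff_tendsto_slope.mp hd).mono_left
    (nhdsWithin_mono x (show Set.Ioi x ⊆ {x}ᶜ from
      fun y hy => Set.mem_compl_singleton_iff.mpr (ne_of_gt hy)))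
  refine ge_of_tendsto h ?_
  filter_upwards [self_mem_nhdsWithin] with y hy
  have hy' : x < y := hy
  rw [slope_def_field]
  exact div_nonneg (sub_nonneg.2 (hmono.monotone hy'.le)) (sub_nonneg.2 hy'.le)

lemma iter_hasDerivAt {φ : ℝ → ℝ} (hφ : ContDiff ℝ 1 φ) (p : ℕ) (x : ℝ) :
    HasDerivAt (φ^[p]) (∏ r ∈ Finset.range p, deriv φ (φ^[r] x)) x := by
  induction p with
  | zero => simpa using hasDerivAt_id x
  | succ n ih =>
    rw [Function.iterate_succ']
    have h1 : HasDerivAt φ (deriv φ (φ^[n] x)) (φ^[n] x) :=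
      ((hφ.differentiable one_ne_zero) _).hasDerivAt
    have h2 := h1.comp x ih
    rw [Finset.prod_range_succ]
    rw [mul_comm]
    exact h2

lemma step_cov {φ : ℝ → ℝ} (hφ : ContDiff ℝ 1 φ) (hmono : StrictMono φ)
    (a l T : ℝ) (hl : 0 < l) (p : ℕ) (A B : ℝ) (hAB : A < B)
    (hA : φ^[p] A = T) (hB : φ^[p] B = T + 2 * l) (G : ℝ → ℝ) :
    ∫ t in Ioc a (a + 2 * l), (wMap φ p A B a l t) ^ 2 * G (uMap φ p A B a l T t)
      = (2 * l / (B - A)) * ∫ x in Ioc a (a + 2 * l), G x := by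
  set c : ℝ := (B - A) / (2 * l) with hc_def
  have hc : 0 < c := div_pos (by linarith) (by linarith)
  set u : ℝ → ℝ := uMap φ p A B a l T with hu_def
  set ρ : ℝ → ℝ := rhoMap A B a l with hρ_def
  have hρd : ∀ t, HasDerivAt ρ c t := by
    intro t
    have : HasDerivAt (fun t : ℝ => c * (t - a) + A) (c * 1) t :=
      (((hasDerivAt_id t).sub_const a).const_mul c).add_const A
    rw [mul_one] at this; exact this
  have hud : ∀ t, HasDerivAt u ((∏ r ∈ Finset.range p, deriv φ (φ^[r] (ρ t))) * c) t := by
    intro t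
    have := ((iter_hasDerivAt hφ p (ρ t)).comp t (hρd t)).sub_const T |>.add_const a
    exact this
  have hρmono : StrictMono ρ := fun x y hxy => by
    simp only [hρ_def, rhoMap]
    have := mul_lt_mul_of_pos_left (sub_lt_sub_right hxy a) hc
    linarith
  have humono : StrictMono u := fun x y hxy => by
    have := (hmono.iterate p) (hρmono hxy)
    simp only [hu_def, uMap]
    linarith
  have hρa : ρ a = A := by simp [hρ_def, rhoMap]
  have hρb : ρ (a + 2 * l) = B := by
    simp only [hρ_def, rhoMap, add_sub_cancel_left]
    rw [div_mul_cancel₀]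
    · ring
    · positivity
  have hua : u a = a := by
    show φ^[p] (rhoMap A B a l a) - T + a = a
    rw [← hρ_def, hρa, hA]; ring
  have hub : u (a + 2 * l) = a + 2 * l := by
    show φ^[p] (rhoMap A B a l (a + 2 * l)) - T + a = a + 2 * l
    rw [← hρ_def, hρb, hB]; ring
  have hucont : Continuous u := by
    have : Continuous ρ := by
      rw [hρ_def]; unfold rhoMap; fun_prop
    exact (((hφ.continuous.iterate p).comp this).sub continuous_const).add continuous_const
  -- image of Ioc
  have himg : u '' Ioc a (a + 2 * l) = Ioc a (a + 2 * l) := by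
    apply Set.Subset.antisymm
    · rintro _ ⟨x, hx, rfl⟩
      constructor
      · calc a = u a := hua.symm
          _ < u x := humono hx.1
      · calc u x ≤ u (a + 2 * l) := humono.monotone hx.2
          _ = a + 2 * l := hub
    · intro y hy
      have hab : a ≤ a + 2 * l := by linarith
      have hsub : Icc (u a) (u (a + 2 * l)) ⊆ u '' Icc a (a + 2 * l) :=
        intermediate_value_Icc hab hucont.continuousOn
      have hy' : y ∈ Icc (u a) (u (a + 2 * l)) := by
        rw [hua, hub]; exact ⟨hy.1.le, hy.2⟩
      obtain ⟨x, hx, hxy⟩ := hsub hy'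
      refine ⟨x, ⟨?_, hx.2⟩, hxy⟩
      rcases eq_or_lt_of_le hx.1 with h | h
      · exfalso; rw [← h, hua] at hxy; exact absurd (hxy ▸ hy.1) (lt_irrefl _)
      · exact h
  have key := integral_image_eq_integral_abs_deriv_smul (s := Ioc a (a + 2 * l))
    measurableSet_Ioc (fun x _ => (hud x).hasDerivWithinAt) (humono.injective.injOn) G
  rw [himg] at key
  have habs : ∀ t, |(∏ r ∈ Finset.range p, deriv φ (φ^[r] (ρ t))) * c|
      = c * (wMap φ p A B a l t) ^ 2 := by
    intro t
    have hw : (wMap φ p A B a l t) ^ 2 = ∏ r ∈ Finset.range p, deriv φ (φ^[r] (ρ t)) := by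
      rw [wMap, ← Finset.prod_pow]
      exact Finset.prod_congr rfl fun r _ =>
        Real.sq_sqrt (deriv_nonneg_of_mono hφ hmono _)
    rw [hw, abs_of_nonneg, mul_comm]
    exact mul_nonneg (Finset.prod_nonneg fun r _ => deriv_nonneg_of_mono hφ hmono _) hc.le
  rw [show (∫ t in Ioc a (a+2*l), |(∏ r ∈ Finset.range p, deriv φ (φ^[r] (ρ t))) * c| •
      G (u t)) = ∫ t in Ioc a (a+2*l), c * ((wMap φ p A B a l t)^2 * G (u t)) from
      integral_congr_ae (Filter.Eventually.of_forall fun t => by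
        simp only [habs, smul_eq_mul]; ring)] at key
  rw [integral_const_mul] at key
  have hBA : B - A ≠ 0 := by linarith
  have hl2 : (2 : ℝ) * l ≠ 0 := by linarith
  rw [show (2 : ℝ) * l / (B - A) = c⁻¹ by rw [hc_def]; field_simp]
  rw [key, ← mul_assoc, inv_mul_cancel₀ (ne_of_gt hc), one_mul]

lemma gen_mul {φ : ℝ → ℝ} (hφ : ContDiff ℝ 1 φ) (hmono : StrictMono φ)
    (a l T : ℝ) (hl : 0 < l) (k : ℕ)
    (A B : ℕ → ℝ)
    (hAB : ∀ p, 1 ≤ p → p ≤ k →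
      A p < B p ∧ φ^[p] (A p) = T ∧ φ^[p] (B p) = T + 2 * l) :
    ∀ ps : List ℕ, (∀ p ∈ ps, 1 ≤ p ∧ p ≤ k) → ∀ g h : ℝ → ℝ,
      ∫ t in Ioc a (a + 2 * l), gen φ a l T A B ps g t * gen φ a l T A B ps h t
        = (ps.map (fun p => 2 * l / (B p - A p))).prod *
          ∫ t in Ioc a (a + 2 * l), g t * h t := by
  intro ps
  induction ps with
  | nil => intro _ g h; simp [gen]
  | cons p ps ih =>
    intro hmem g h
    have hp := hmem p List.mem_cons_self
    obtain ⟨hlt, hA, hB⟩ := hAB p hp.1 hp.2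
    have hps' : ∀ q ∈ ps, 1 ≤ q ∧ q ≤ k := fun q hq => hmem q (List.mem_cons_of_mem p hq)
    show (∫ t in Ioc a (a + 2 * l),
        gen φ a l T A B ps (fun x => g (uMap φ p (A p) (B p) a l T x) * wMap φ p (A p) (B p) a l x) t *
        gen φ a l T A B ps (fun x => h (uMap φ p (A p) (B p) a l T x) * wMap φ p (A p) (B p) a l x) t) = _
    rw [ih hps']
    have : (∫ t in Ioc a (a + 2 * l),
        (g (uMap φ p (A p) (B p) a l T t) * wMap φ p (A p) (B p) a l t) *
        (h (uMap φ p (A p) (B p) a l T t) * wMap φ p (A p) (B p) a l t))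
        = ∫ t in Ioc a (a + 2 * l), (wMap φ p (A p) (B p) a l t) ^ 2 *
            ((fun x => g x * h x) (uMap φ p (A p) (B p) a l T t)) := by
      apply integral_congr_ae
      exact Filter.Eventually.of_forall fun t => by ring
    rw [this, step_cov hφ hmono a l T hl p (A p) (B p) hlt hA hB (fun x => g x * h x)]
    simp only [List.map_cons, List.prod_cons]
    ring

lemma prod_cancel (l : ℝ) (hl : 0 < l) (A B : ℕ → ℝ) :
    ∀ ps : List ℕ, (∀ p ∈ ps, A p < B p) →
      ((ps.map fun p => Real.sqrt ((B p - A p) / (2 * l))).prod) ^ 2 *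
        (ps.map fun p => 2 * l / (B p - A p)).prod = 1 := by
  intro ps
  induction ps with
  | nil => intro _; simp
  | cons p ps ih =>
    intro hlt
    have hp := hlt p List.mem_cons_self
    have hBA : B p - A p ≠ 0 := by intro h; linarith [hp]
    have hl2 : (2 : ℝ) * l ≠ 0 := by linarith
    have hpos : (0:ℝ) ≤ (B p - A p) / (2 * l) := div_nonneg (by linarith) (by linarith)
    have h1 : Real.sqrt ((B p - A p) / (2 * l)) ^ 2 = (B p - A p) / (2 * l) :=
      Real.sq_sqrt hpos
    have h2 : (B p - A p) / (2 * l) * (2 * l / (B p - A p)) = 1 := by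
      field_simp
    have h3 := ih (fun q hq => hlt q (List.mem_cons_of_mem p hq))
    simp only [List.map_cons, List.prod_cons, mul_pow]
    calc Real.sqrt ((B p - A p) / (2 * l)) ^ 2 *
          (List.map (fun p => Real.sqrt ((B p - A p) / (2 * l))) ps).prod ^ 2 *
          (2 * l / (B p - A p) * (List.map (fun p => 2 * l / (B p - A p)) ps).prod)
        = ((B p - A p) / (2 * l) * (2 * l / (B p - A p))) *
          ((List.map (fun p => Real.sqrt ((B p - A p) / (2 * l))) ps).prod ^ 2 *
           (List.map (fun p => 2 * l / (B p - A p)) ps).prod) := by rw [h1]; ring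
      _ = 1 := by rw [h2, h3]; ring

/-- If `{f_n}` is an orthonormal system in `L²([a, a+2l])`, then the
`s`-th generation functions have squared norm `∏_{i=1}^{s} (2l/(B_{p_i} − A_{p_i}))`, and
so the rescaled system `(∏_{i=1}^{s} √((B_{p_i} − A_{p_i})/(2l))) · f_n^{p₁,…,p_s}` is an
orthonormal system in `L²([a, a+2l])`. -/
theorem sth_generation_orthonormal
    (φ : ℝ → ℝ) (hφ : ContDiff ℝ 1 φ) (hmono : StrictMono φ)
    (a l T : ℝ) (hl : 0 < l) (s k : ℕ) (hs : 1 ≤ s) (hk : 1 ≤ k)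
    (A B : ℕ → ℝ)
    (hAB : ∀ p, 1 ≤ p → p ≤ k →
      A p < B p ∧ φ^[p] (A p) = T ∧ φ^[p] (B p) = T + 2 * l)
    (f : ℕ → ℝ → ℝ)
    (hf : ∀ n, MemLp (f n) 2 (volume.restrict (Set.Ioc a (a + 2 * l))))
    (horth : ∀ m n, m ≠ n → ∫ t in a..(a + 2 * l), f m t * f n t = 0)
    (hnorm : ∀ n, ∫ t in a..(a + 2 * l), (f n t) ^ 2 = 1)
    (ps : List ℕ) (hlen : ps.length = s) (hps : ∀ p ∈ ps, 1 ≤ p ∧ p ≤ k) :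
    (∀ n, ∫ t in a..(a + 2 * l), (gen φ a l T A B ps (f n) t) ^ 2
        = (ps.map (fun p => 2 * l / (B p - A p))).prod) ∧
    (∀ m n, m ≠ n →
      ∫ t in a..(a + 2 * l),
        ((ps.map (fun p => Real.sqrt ((B p - A p) / (2 * l)))).prod *
            gen φ a l T A B ps (f m) t) *
        ((ps.map (fun p => Real.sqrt ((B p - A p) / (2 * l)))).prod *
            gen φ a l T A B ps (f n) t) = 0) ∧
    (∀ n, ∫ t in a..(a + 2 * l),
        ((ps.map (fun p => Real.sqrt ((B p - A p) / (2 * l)))).prod *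
            gen φ a l T A B ps (f n) t) ^ 2 = 1) := by
  have hab : a ≤ a + 2 * l := by linarith
  have key := gen_mul hφ hmono a l T hl k A B hAB ps hps
  -- convert interval integrals to set integrals
  have hiv : ∀ F : ℝ → ℝ, (∫ t in a..(a + 2 * l), F t) = ∫ t in Ioc a (a + 2 * l), F t :=
    fun F => intervalIntegral.integral_of_le hab
  set C : ℝ := (ps.map (fun p => Real.sqrt ((B p - A p) / (2 * l)))).prod with hC
  set D : ℝ := (ps.map (fun p => 2 * l / (B p - A p))).prod with hD
  have hCD : C ^ 2 * D = 1 := by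
    rw [hC, hD]
    exact prod_cancel l hl A B ps (fun p hp => (hAB p (hps p hp).1 (hps p hp).2).1)
  have h1 : ∀ n, ∫ t in a..(a + 2 * l), (gen φ a l T A B ps (f n) t) ^ 2 = D := by
    intro n
    rw [hiv]
    have := key (f n) (f n)
    rw [show (∫ t in Ioc a (a+2*l), (gen φ a l T A B ps (f n) t)^2)
        = ∫ t in Ioc a (a+2*l), gen φ a l T A B ps (f n) t * gen φ a l T A B ps (f n) t from
        integral_congr_ae (Filter.Eventually.of_forall fun t => sq _), this, ← hiv]
    have := hnorm n
    rw [show (∫ t in a..(a+2*l), f n t * f n t)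
        = ∫ t in a..(a+2*l), (f n t)^2 from by
        apply intervalIntegral.integral_congr; intro t _; exact (sq _).symm, this, mul_one]
  refine ⟨h1, ?_, ?_⟩
  · intro m n hmn
    rw [hiv]
    have : (∫ t in Ioc a (a+2*l), (C * gen φ a l T A B ps (f m) t) *
        (C * gen φ a l T A B ps (f n) t))
        = C^2 * ∫ t in Ioc a (a+2*l), gen φ a l T A B ps (f m) t * gen φ a l T A B ps (f n) t := by
      rw [← integral_const_mul]
      exact integral_congr_ae (Filter.Eventually.of_forall fun t => by ring)
    rw [this, key (f m) (f n), ← hiv, horth m n hmn]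
    ring
  · intro n
    rw [hiv]
    have : (∫ t in Ioc a (a+2*l), (C * gen φ a l T A B ps (f n) t)^2)
        = C^2 * ∫ t in Ioc a (a+2*l), gen φ a l T A B ps (f n) t * gen φ a l T A B ps (f n) t := by
      rw [← integral_const_mul]
      exact integral_congr_ae (Filter.Eventually.of_forall fun t => by ring)
    rw [this, key (f n) (f n), ← hiv]
    have h2 : (∫ t in a..(a+2*l), f n t * f n t) = 1 := by
      rw [show (∫ t in a..(a+2*l), f n t * f n t)
          = ∫ t in a..(a+2*l), (f n t)^2 from by
          apply intervalIntegral.integral_congr; intro t _; exact (sq _).symm]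
      exact hnorm n
    rw [h2, mul_one, hCD]
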